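/- arXiv:2105.14596 — 6 statements merged into one kernel-verified Lean document; each statement's English description precedes it below -/
import Mathlib

section
/- Let (γₙ), (βₙ) be sequences of nonnegative reals with n(γₙ² + βₙ²) → c for a finite constant c ≥ 0, and define Kₙ = γₙβₙ / √(n⁻¹(n⁻¹ + γₙ² + βₙ²)). Then limsup Kₙ ≤ c/√(1 + c). In particular, if c < (1+√5)/2 (the golden ratio) then limsup Kₙ < 1. -/
open Filter

theorem stmt4 (γ β : ℕ → ℝ) (hγ : ∀ n, 0 ≤ γ n) (hβ : ∀ n, 0 ≤ β n)
    (c : ℝ) (hc : 0 ≤ c)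
    (h : Tendsto (fun n : ℕ => (n : ℝ) * ((γ n) ^ 2 + (β n) ^ 2)) atTop (nhds c))
    (K : ℕ → ℝ)
    (hK : ∀ n, K n = γ n * β n /
        Real.sqrt ((n : ℝ)⁻¹ * ((n : ℝ)⁻¹ + (γ n) ^ 2 + (β n) ^ 2))) :
    limsup K atTop ≤ c / Real.sqrt (1 + c) ∧
      (c < (1 + Real.sqrt 5) / 2 → limsup K atTop < 1) := by
  set x : ℕ → ℝ := fun n => (n : ℝ) * ((γ n) ^ 2 + (β n) ^ 2) with hxdef
  have hx0 : ∀ n, 0 ≤ x n := fun n =>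
    mul_nonneg (Nat.cast_nonneg n) (by positivity)
  set g : ℕ → ℝ := fun n => x n / (2 * Real.sqrt (1 + x n)) with hgdef
  have hK0 : ∀ n, 0 ≤ K n := by
    intro n
    rw [hK n]
    exact div_nonneg (mul_nonneg (hγ n) (hβ n)) (Real.sqrt_nonneg _)
  have hKg : ∀ n, K n ≤ g n := by
    intro n
    rcases Nat.eq_zero_or_pos n with h0 | hpos
    · subst h0
      simp [hgdef, hxdef, hK 0]
    · have hn : (0:ℝ) < n := by exact_mod_cast hpos
      have hA : (0:ℝ) < 1 + x n := by linarith [hx0 n]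
      have hden : Real.sqrt ((n : ℝ)⁻¹ * ((n : ℝ)⁻¹ + (γ n) ^ 2 + (β n) ^ 2))
          = Real.sqrt (1 + x n) / n := by
        rw [show (n : ℝ)⁻¹ * ((n : ℝ)⁻¹ + (γ n) ^ 2 + (β n) ^ 2)
            = (1 + x n) / (n : ℝ) ^ 2 by field_simp [hxdef]; ring]
        rw [Real.sqrt_div hA.le, Real.sqrt_sq hn.le]
      rw [hK n, hden, div_div_eq_mul_div, hgdef]
      have hsq : (0:ℝ) < Real.sqrt (1 + x n) := Real.sqrt_pos.mpr hA
      rw [div_le_div_iff₀ hsq (by positivity)]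
      have h2 : 2 * (γ n * β n) ≤ (γ n) ^ 2 + (β n) ^ 2 := by
        nlinarith [sq_nonneg (γ n - β n)]
      have : γ n * β n * n * 2 ≤ n * ((γ n) ^ 2 + (β n) ^ 2) := by
        nlinarith
      calc γ n * β n * n * (2 * Real.sqrt (1 + x n))
          = (γ n * β n * n * 2) * Real.sqrt (1 + x n) := by ring
        _ ≤ (n * ((γ n) ^ 2 + (β n) ^ 2)) * Real.sqrt (1 + x n) :=
            mul_le_mul_of_nonneg_right this hsq.le
        _ = x n * Real.sqrt (1 + x n) := by rw [hxdef]
  have h1c : (0:ℝ) < 1 + c := by linarith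
  have hgt : Tendsto g atTop (nhds (c / (2 * Real.sqrt (1 + c)))) := by
    have h1 : Tendsto (fun n => 1 + x n) atTop (nhds (1 + c)) :=
      tendsto_const_nhds.add h
    have h2 : Tendsto (fun n => Real.sqrt (1 + x n)) atTop
        (nhds (Real.sqrt (1 + c))) :=
      (Real.continuous_sqrt.tendsto _).comp h1
    exact h.div (tendsto_const_nhds.mul h2)
      (by positivity)
  have hls : limsup K atTop ≤ c / (2 * Real.sqrt (1 + c)) := by
    have hlim := hgt.limsup_eq
    calc limsup K atTop ≤ limsup g atTop :=
          limsup_le_limsup (Eventually.of_forall hKg)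
            (isCoboundedUnder_le_of_le atTop hK0)
            hgt.isBoundedUnder_le
      _ = _ := hlim
  have hsqpos : (0:ℝ) < Real.sqrt (1 + c) := Real.sqrt_pos.mpr h1c
  constructor
  · refine hls.trans ?_
    gcongr
    · linarith
  · intro hφ
    have hc2 : c ^ 2 < 1 + c := by
      rcases le_or_gt c 1 with h1 | h1
      · nlinarith
      · have hlt : 2 * c - 1 < Real.sqrt 5 := by linarith
        have h2 : (2 * c - 1) ^ 2 < Real.sqrt 5 ^ 2 :=
          pow_lt_pow_left₀ hlt (by linarith) two_ne_zero
        rw [Real.sq_sqrt (by norm_num : (0:ℝ) ≤ 5)] at h2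
        nlinarith
    have hcs : c < Real.sqrt (1 + c) := (Real.lt_sqrt hc).mpr hc2
    have : c / (2 * Real.sqrt (1 + c)) < 1 := by
      rw [div_lt_one (by positivity)]
      nlinarith
    exact lt_of_le_of_lt hls this
end

section
/- Let Z₁, Z₂ be independent standard normal random variables and σ₁, σ₂ > 0. Define g(h₁,h₂) = (h₁ + Z₁)(h₂ + Z₂)/√(σ₂²(h₁ + Z₁)² + σ₁²(h₂ + Z₂)²). Then the distribution of g(0,0) differs from the distribution of g(1,0); in particular, Sobel's statistic is not a regular estimator at (0,0): the limit law of √n(Tₙ − ψ(θₙ)) along local sequences θₙ = (h₁/√n, h₂/√n) depends on (h₁,h₂). -/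
open MeasureTheory ProbabilityTheory Real
open scoped ENNReal NNReal

lemma W_eq (u : ℝ) : gaussianPDFReal 1 1 u + gaussianPDFReal (-1) 1 u - 2 * gaussianPDFReal 0 1 u
    = 2 * (Real.sqrt (2*π))⁻¹ * Real.exp (-u^2/2) * (Real.exp (-(1:ℝ)/2) * Real.cosh u - 1) := by
  simp only [gaussianPDFReal, Real.cosh_eq, NNReal.coe_one, mul_one]
  have e1 : rexp (-(u - 1)^2/2) = rexp (-u^2/2) * (rexp (-(1:ℝ)/2) * rexp u) := by
    rw [← Real.exp_add, ← Real.exp_add]; congr 1; ring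
  have e2 : rexp (-(u - -1)^2/2) = rexp (-u^2/2) * (rexp (-(1:ℝ)/2) * rexp (-u)) := by
    rw [← Real.exp_add, ← Real.exp_add]; congr 1; ring
  have e0 : rexp (-(u - 0)^2/2) = rexp (-u^2/2) := by congr 1; ring
  rw [e1, e2, e0]
  ring

lemma gaussianPDFReal_neg' (m x : ℝ) :
    gaussianPDFReal m 1 (-x) = gaussianPDFReal (-m) 1 x := by
  simp only [gaussianPDFReal]
  ring_nf

lemma integral_gaussianReal' (m : ℝ) (f : ℝ → ℝ) :
    ∫ x, f x ∂(gaussianReal m 1) = ∫ x, gaussianPDFReal m 1 x * f x := by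
  rw [gaussianReal_of_var_ne_zero m one_ne_zero]
  have h : (gaussianPDF m 1) = fun x => ((gaussianPDFReal m 1 x).toNNReal : ℝ≥0∞) := rfl
  rw [h, integral_withDensity_eq_integral_smul (measurable_gaussianPDFReal m 1).real_toNNReal]
  congr 1
  ext x
  simp [NNReal.smul_def, Real.coe_toNNReal _ (gaussianPDFReal_nonneg m 1 x)]

lemma integrable_pdf_mul (m : ℝ) {F : ℝ → ℝ} (hF : Continuous F) {C : ℝ}
    (hC : ∀ x, |F x| ≤ C) :
    Integrable (fun x => gaussianPDFReal m 1 x * F x) := by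
  refine (Integrable.bdd_mul (integrable_gaussianPDFReal m 1)
    hF.aestronglyMeasurable (c := C) (ae_of_all _ fun x => hC x)).congr ?_
  filter_upwards with x using mul_comm _ _

lemma core (F : ℝ → ℝ) (hFcont : Continuous F) (C : ℝ) (hFbd : ∀ u, |F u| ≤ C)
    (hFeven : ∀ u, F (-u) = F u)
    (hmono : ∀ u v : ℝ, u^2 < v^2 → F u < F v) :
    ∫ x, F x ∂(gaussianReal 0 1) < ∫ x, F (1+x) ∂(gaussianReal 0 1) := by
  obtain ⟨c, hc01, hcosh⟩ : ∃ c ∈ Set.Icc (0:ℝ) 2, Real.cosh c = Real.exp (1/2) := by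
    have he1 : (2:ℝ) ≤ Real.exp 1 := by
      have := Real.add_one_le_exp (1:ℝ); linarith
    have he2 : Real.exp (1/2) * Real.exp (1/2) = Real.exp 1 := by
      rw [← Real.exp_add]; norm_num
    have he3 : Real.exp 1 < 2.7182818286 := Real.exp_one_lt_d9
    have he4 : Real.exp (1/2) < 2 := by
      nlinarith [Real.exp_pos ((1:ℝ)/2)]
    have h1 : Real.cosh 0 ≤ Real.exp (1/2) := by
      rw [Real.cosh_zero]
      nlinarith [Real.exp_pos ((1:ℝ)/2)]
    have h2 : Real.exp (1/2) ≤ Real.cosh 2 := by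
      rw [Real.cosh_eq]
      have hee : Real.exp 2 = Real.exp 1 * Real.exp 1 := by rw [← Real.exp_add]; norm_num
      nlinarith [Real.exp_pos (-2:ℝ)]
    exact intermediate_value_Icc (by norm_num) Real.continuous_cosh.continuousOn ⟨h1, h2⟩
  have hc0 : 0 < c := by
    rcases lt_or_eq_of_le hc01.1 with h | h
    · exact h
    · exfalso
      rw [← h, Real.cosh_zero] at hcosh
      nlinarith [Real.add_one_le_exp ((1:ℝ)/2)]
  set W : ℝ → ℝ := fun u => gaussianPDFReal 1 1 u + gaussianPDFReal (-1) 1 u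
      - 2 * gaussianPDFReal 0 1 u with hWdef
  have hts : ∀ u, (rexp (-(1:ℝ)/2) * Real.cosh u - 1) * rexp ((1:ℝ)/2)
      = Real.cosh u - rexp ((1:ℝ)/2) := by
    intro u
    have h : rexp (-(1:ℝ)/2) * rexp ((1:ℝ)/2) = 1 := by
      rw [← Real.exp_add]; norm_num
    linear_combination Real.cosh u * h
  have hFceq : ∀ u : ℝ, u^2 = c^2 → F u = F c := by
    intro u hu
    have : (u - c) * (u + c) = 0 := by nlinarith
    rcases mul_eq_zero.mp this with h | h
    · rw [show u = c by linarith]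
    · rw [show u = -c by linarith, hFeven]
  have hsqrtpos : (0:ℝ) < Real.sqrt (2*π) := Real.sqrt_pos.mpr (by positivity)
  have hsign : ∀ u, 0 ≤ (F u - F c) * W u := by
    intro u
    have hWu : W u = 2 * (Real.sqrt (2*π))⁻¹ * Real.exp (-u^2/2)
        * (Real.exp (-(1:ℝ)/2) * Real.cosh u - 1) := W_eq u
    have hpos : 0 < 2 * (Real.sqrt (2*π))⁻¹ * Real.exp (-u^2/2) := by positivity
    have hep : 0 < rexp ((1:ℝ)/2) := Real.exp_pos _
    rcases lt_trichotomy (u^2) (c^2) with h | h | h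
    · have hF : F u < F c := hmono u c h
      have hch : Real.cosh u < Real.cosh c := Real.cosh_lt_cosh.mpr (sq_lt_sq.mp h)
      have ht : Real.exp (-(1:ℝ)/2) * Real.cosh u - 1 < 0 := by
        nlinarith [hts u, hcosh]
      rw [hWu]
      nlinarith [mul_nonneg (neg_nonneg.mpr (sub_nonpos.mpr hF.le))
        (neg_nonneg.mpr (mul_nonpos_of_nonneg_of_nonpos hpos.le ht.le))]
    · rw [hFceq u h]; simp
    · have hF : F c < F u := hmono c u h
      have hch : Real.cosh c < Real.cosh u := Real.cosh_lt_cosh.mpr (sq_lt_sq.mp h)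
      have ht : 0 < Real.exp (-(1:ℝ)/2) * Real.cosh u - 1 := by
        nlinarith [hts u, hcosh]
      rw [hWu]
      exact (mul_pos (sub_pos.mpr hF) (mul_pos hpos ht)).le
  have hI : ∀ m : ℝ, Integrable (fun u => gaussianPDFReal m 1 u * F u) :=
    fun m => integrable_pdf_mul m hFcont hFbd
  have hIa : Integrable (fun u => gaussianPDFReal 1 1 u + gaussianPDFReal (-1) 1 u) :=
    (integrable_gaussianPDFReal 1 1).add (integrable_gaussianPDFReal (-1) 1)
  have hIb : Integrable (fun u => 2 * gaussianPDFReal 0 1 u) :=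
    (integrable_gaussianPDFReal 0 1).const_mul 2
  have hWint : Integrable W := by
    refine (hIa.sub hIb).congr (ae_of_all _ fun u => ?_)
    simp only [Pi.sub_apply, hWdef]
  have hIc : Integrable (fun u => gaussianPDFReal 1 1 u * F u + gaussianPDFReal (-1) 1 u * F u) :=
    (hI 1).add (hI (-1))
  have hId : Integrable (fun u => 2 * (gaussianPDFReal 0 1 u * F u)) :=
    (hI 0).const_mul 2
  have hFW : Integrable (fun u => F u * W u) := by
    refine (hIc.sub hId).congr (ae_of_all _ fun u => ?_)
    simp only [Pi.sub_apply, hWdef]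
    ring
  have hint : Integrable (fun u => (F u - F c) * W u) := by
    refine (hFW.sub (hWint.const_mul (F c))).congr (ae_of_all _ fun u => ?_)
    simp only [Pi.sub_apply]
    ring
  have hWzero : ∫ u, W u = 0 := by
    simp only [hWdef]
    rw [integral_sub hIa hIb, integral_add (integrable_gaussianPDFReal 1 1)
      (integrable_gaussianPDFReal (-1) 1), MeasureTheory.integral_const_mul,
      integral_gaussianPDFReal_eq_one 1 one_ne_zero,
      integral_gaussianPDFReal_eq_one (-1) one_ne_zero,
      integral_gaussianPDFReal_eq_one 0 one_ne_zero]
    norm_num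
  have hposint : 0 < ∫ u, (F u - F c) * W u := by
    rw [integral_pos_iff_support_of_nonneg hsign hint]
    refine lt_of_lt_of_le (b := volume (Set.Ioi c)) ?_ (measure_mono ?_)
    · show (0:ℝ≥0∞) < volume (Set.Ioi c)
      simp [Real.volume_Ioi]
    · intro u (hu : c < u)
      have h2 : c^2 < u^2 := by nlinarith
      have hWu : W u = 2 * (Real.sqrt (2*π))⁻¹ * Real.exp (-u^2/2)
          * (Real.exp (-(1:ℝ)/2) * Real.cosh u - 1) := W_eq u
      have hpos : 0 < 2 * (Real.sqrt (2*π))⁻¹ * Real.exp (-u^2/2) := by positivity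
      have hch : Real.cosh c < Real.cosh u := Real.cosh_lt_cosh.mpr (sq_lt_sq.mp h2)
      have ht : 0 < Real.exp (-(1:ℝ)/2) * Real.cosh u - 1 := by
        nlinarith [hts u, hcosh, Real.exp_pos ((1:ℝ)/2)]
      have hF : F c < F u := hmono c u h2
      have hprod : 0 < (F u - F c) * W u := by
        rw [hWu]
        exact mul_pos (sub_pos.mpr hF) (mul_pos hpos ht)
      exact hprod.ne'
  have heq1 : ∫ u, (F u - F c) * W u = (∫ u, F u * W u) - F c * ∫ u, W u := by
    rw [← MeasureTheory.integral_const_mul, ← integral_sub hFW (hWint.const_mul (F c))]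
    refine integral_congr_ae (ae_of_all _ fun u => ?_)
    show (F u - F c) * W u = F u * W u - F c * W u
    ring
  have hFWpos : 0 < ∫ u, F u * W u := by
    rw [heq1, hWzero] at hposint
    simpa using hposint
  have hneg : ∫ u, gaussianPDFReal (-1) 1 u * F u = ∫ u, gaussianPDFReal 1 1 u * F u := by
    rw [← integral_neg_eq_self (fun u => gaussianPDFReal 1 1 u * F u)]
    refine integral_congr_ae (ae_of_all _ fun u => ?_)
    show gaussianPDFReal (-1) 1 u * F u = gaussianPDFReal 1 1 (-u) * F (-u)
    rw [gaussianPDFReal_neg' 1 u, hFeven]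
  have hexpand : ∫ u, F u * W u
      = 2 * ((∫ u, gaussianPDFReal 1 1 u * F u) - ∫ u, gaussianPDFReal 0 1 u * F u) := by
    have h : ∫ u, F u * W u = ∫ u, ((gaussianPDFReal 1 1 u * F u
        + gaussianPDFReal (-1) 1 u * F u) - 2 * (gaussianPDFReal 0 1 u * F u)) := by
      refine integral_congr_ae (ae_of_all _ fun u => ?_)
      simp only [hWdef]
      ring
    rw [h, integral_sub hIc hId, integral_add (hI 1) (hI (-1)),
      MeasureTheory.integral_const_mul, hneg]
    ring
  rw [integral_gaussianReal' 0 F, integral_gaussianReal' 0 (fun x => F (1+x))]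
  have hshift : ∫ x, gaussianPDFReal 0 1 x * F (1+x) = ∫ u, gaussianPDFReal 1 1 u * F u := by
    rw [← integral_add_right_eq_self (fun u => gaussianPDFReal 1 1 u * F u) 1]
    refine integral_congr_ae (ae_of_all _ fun x => ?_)
    show gaussianPDFReal 0 1 x * F (1 + x) = gaussianPDFReal 1 1 (x + 1) * F (x + 1)
    have h : gaussianPDFReal 1 1 (x + 1) = gaussianPDFReal 0 1 x := by
      rw [gaussianPDFReal_add]; norm_num
    rw [h, add_comm 1 x]
  rw [hshift]
  rw [hexpand] at hFWpos
  linarith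

lemma inner_lt {s b a : ℝ} (hs : 0 < s) (hb : 0 < b) (ha : 0 < a) :
    ∫ x, a*x^2/(s*x^2+b) ∂(gaussianReal 0 1)
      < ∫ x, a*(1+x)^2/(s*(1+x)^2+b) ∂(gaussianReal 0 1) := by
  have hden : ∀ u : ℝ, 0 < s*u^2+b := fun u => by positivity
  have h := core (fun u => a*u^2/(s*u^2+b))
    (Continuous.div (by fun_prop) (by fun_prop) (fun u => (hden u).ne')) (a/s)
    (fun u => by
      rw [abs_of_nonneg (by positivity), div_le_div_iff₀ (hden u) hs]
      nlinarith [sq_nonneg u])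
    (fun u => by simp)
    (fun u v huv => by
      rw [div_lt_div_iff₀ (hden u) (hden v)]
      nlinarith [mul_pos (mul_pos ha hb) (sub_pos.mpr huv)])
  simpa using h

theorem stmt11 {Ω : Type*} [MeasurableSpace Ω] (μ : Measure Ω) [IsProbabilityMeasure μ]
    (Z₁ Z₂ : Ω → ℝ) (hmeas1 : Measurable Z₁) (hmeas2 : Measurable Z₂)
    (hZ₁ : μ.map Z₁ = gaussianReal 0 1)
    (hZ₂ : μ.map Z₂ = gaussianReal 0 1)
    (hind : IndepFun Z₁ Z₂ μ)
    (σ₁ σ₂ : ℝ) (h₁ : 0 < σ₁) (h₂ : 0 < σ₂)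
    (g : ℝ → ℝ → Ω → ℝ)
    (hg : ∀ h₁' h₂' ω, g h₁' h₂' ω = (h₁' + Z₁ ω) * (h₂' + Z₂ ω) /
        Real.sqrt (σ₂ ^ 2 * (h₁' + Z₁ ω) ^ 2 + σ₁ ^ 2 * (h₂' + Z₂ ω) ^ 2)) :
    μ.map (g 0 0) ≠ μ.map (g 1 0) := by
  intro hEq
  set γ : Measure ℝ := gaussianReal 0 1 with hγ
  -- the squared statistic as a function of (x, y)
  set Q : ℝ → ℝ → ℝ → ℝ :=
    fun h x y => (h+x)^2*y^2 / (σ₂^2*(h+x)^2 + σ₁^2*y^2) with hQdef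
  -- pointwise squares
  have gsq : ∀ h : ℝ, ∀ ω, (g h 0 ω)^2 = Q h (Z₁ ω) (Z₂ ω) := by
    intro h ω
    rw [hg]
    have hnn : (0:ℝ) ≤ σ₂ ^ 2 * (h + Z₁ ω) ^ 2 + σ₁ ^ 2 * (0 + Z₂ ω) ^ 2 := by positivity
    rw [div_pow, Real.sq_sqrt hnn, mul_pow]
    simp only [hQdef, zero_add]
  -- measurability
  have hgm : ∀ h : ℝ, Measurable (g h 0) := by
    intro h
    have : g h 0 = fun ω => (h + Z₁ ω) * (0 + Z₂ ω) /
        Real.sqrt (σ₂ ^ 2 * (h + Z₁ ω) ^ 2 + σ₁ ^ 2 * (0 + Z₂ ω) ^ 2) := funext (hg h 0)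
    rw [this]
    fun_prop
  have hQmeas : ∀ h : ℝ, Measurable (fun p : ℝ × ℝ => Q h p.1 p.2) := by
    intro h
    simp only [hQdef]
    fun_prop
  -- equality of second moments
  have hsq : ∫ ω, (g 0 0 ω)^2 ∂μ = ∫ ω, (g 1 0 ω)^2 ∂μ := by
    have hc : AEStronglyMeasurable (fun t : ℝ => t^2) (μ.map (g 0 0)) :=
      (continuous_pow 2).aestronglyMeasurable
    have hc' : AEStronglyMeasurable (fun t : ℝ => t^2) (μ.map (g 1 0)) :=
      (continuous_pow 2).aestronglyMeasurable
    calc ∫ ω, (g 0 0 ω)^2 ∂μ = ∫ t, t^2 ∂(μ.map (g 0 0)) :=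
          (integral_map (hgm 0).aemeasurable hc).symm
      _ = ∫ t, t^2 ∂(μ.map (g 1 0)) := by rw [hEq]
      _ = ∫ ω, (g 1 0 ω)^2 ∂μ := integral_map (hgm 1).aemeasurable hc'
  -- joint law
  have hjoint : μ.map (fun ω => (Z₁ ω, Z₂ ω)) = γ.prod γ := by
    have h := (indepFun_iff_map_prod_eq_prod_map_map hmeas1.aemeasurable
      hmeas2.aemeasurable).mp hind
    rw [h, hZ₁, hZ₂]
  -- transfer to the product measure
  have htrans : ∀ h : ℝ, ∫ ω, (g h 0 ω)^2 ∂μ = ∫ p : ℝ × ℝ, Q h p.1 p.2 ∂(γ.prod γ) := by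
    intro h
    rw [← hjoint, integral_map (hmeas1.prodMk hmeas2).aemeasurable
      (hQmeas h).aestronglyMeasurable]
    exact integral_congr_ae (ae_of_all _ fun ω => gsq h ω)
  -- integrability on the product
  have hysq : Integrable (fun y : ℝ => y^2) γ := by
    rw [hγ, gaussianReal_of_var_ne_zero 0 one_ne_zero]
    have hmeq : (gaussianPDF 0 1) = fun x => ((gaussianPDFReal 0 1 x).toNNReal : ℝ≥0∞) := rfl
    rw [hmeq, integrable_withDensity_iff_integrable_smul
      (measurable_gaussianPDFReal 0 1).real_toNNReal]
    have hint : Integrable (fun x : ℝ => x ^ (2:ℝ) * Real.exp (-(1/2) * x^2)) :=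
      integrable_rpow_mul_exp_neg_mul_sq (by norm_num) (by norm_num)
    refine ((hint.const_mul ((Real.sqrt (2*π))⁻¹)).congr (ae_of_all _ fun x => ?_))
    have hx2 : x ^ (2:ℝ) = x^2 := by
      rw [show (2:ℝ) = ((2:ℕ):ℝ) by norm_num, Real.rpow_natCast]
    beta_reduce
    rw [NNReal.smul_def, Real.coe_toNNReal _ (gaussianPDFReal_nonneg 0 1 x)]
    simp only [gaussianPDFReal, NNReal.coe_one, mul_one]
    rw [hx2]
    have hexp : Real.exp (-(x - 0)^2/2) = Real.exp (-(1/2) * x^2) := by congr 1; ring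
    rw [hexp, smul_eq_mul]
    ring
  have hsnd : Integrable (fun p : ℝ × ℝ => p.2^2) (γ.prod γ) := by
    have hmap : (γ.prod γ).map Prod.snd = γ := by
      rw [Measure.map_snd_prod, measure_univ, one_smul]
    have h := Integrable.comp_aemeasurable (f := Prod.snd) (g := fun y : ℝ => y^2)
      (by rwa [hmap]) measurable_snd.aemeasurable
    exact h
  have hQbd : ∀ h : ℝ, ∀ x y : ℝ, Q h x y ≤ (σ₂^2)⁻¹ * y^2 := by
    intro h x y
    simp only [hQdef]
    rcases eq_or_lt_of_le (by positivity : (0:ℝ) ≤ σ₂^2*(h+x)^2 + σ₁^2*y^2) with hd | hd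
    · rw [← hd, div_zero]
      positivity
    · rw [div_le_iff₀ hd]
      have : (0:ℝ) < σ₂^2 := by positivity
      rw [inv_mul_eq_div, div_mul_eq_mul_div, le_div_iff₀ this]
      nlinarith [sq_nonneg y, sq_nonneg (h+x), sq_nonneg (y*y), sq_nonneg σ₁, sq_nonneg (σ₁*y^2)]
  have hQnn : ∀ h : ℝ, ∀ x y : ℝ, 0 ≤ Q h x y := by
    intro h x y
    simp only [hQdef]
    positivity
  have hQint : ∀ h : ℝ, Integrable (fun p : ℝ × ℝ => Q h p.1 p.2) (γ.prod γ) := by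
    intro h
    refine Integrable.mono' (hsnd.const_mul ((σ₂^2)⁻¹)) (hQmeas h).aestronglyMeasurable
      (ae_of_all _ fun p => ?_)
    rw [Real.norm_eq_abs, abs_of_nonneg (hQnn h p.1 p.2)]
    exact hQbd h p.1 p.2
  -- iterated integrals
  have hiter : ∀ h : ℝ, ∫ p : ℝ × ℝ, Q h p.1 p.2 ∂(γ.prod γ)
      = ∫ y, (∫ x, Q h x y ∂γ) ∂γ := by
    intro h
    have := integral_prod_symm (fun p : ℝ × ℝ => Q h p.1 p.2) (hQint h)
    simpa using this
  -- inner strict inequality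
  have hinner : ∀ y : ℝ, y ≠ 0 → (∫ x, Q 0 x y ∂γ) < ∫ x, Q 1 x y ∂γ := by
    intro y hy
    have hy2 : 0 < y^2 := lt_of_le_of_ne (sq_nonneg y) (Ne.symm (pow_ne_zero 2 hy))
    have hb : 0 < σ₁^2 * y^2 := by positivity
    have hs : 0 < σ₂^2 := by positivity
    have h := inner_lt (a := y^2) (b := σ₁^2*y^2) hs hb hy2
    rw [hγ]
    calc ∫ x, Q 0 x y ∂(gaussianReal 0 1)
        = ∫ x, y^2*x^2/(σ₂^2*x^2+σ₁^2*y^2) ∂(gaussianReal 0 1) := by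
          refine integral_congr_ae (ae_of_all _ fun x => ?_)
          simp only [hQdef]
          ring_nf
      _ < ∫ x, y^2*(1+x)^2/(σ₂^2*(1+x)^2+σ₁^2*y^2) ∂(gaussianReal 0 1) := h
      _ = ∫ x, Q 1 x y ∂(gaussianReal 0 1) := by
          refine integral_congr_ae (ae_of_all _ fun x => ?_)
          simp only [hQdef]
          ring_nf
  -- outer strict inequality
  have hI0 : Integrable (fun y => ∫ x, Q 0 x y ∂γ) γ := by
    have := (hQint 0).integral_prod_right
    simpa using this
  have hI1 : Integrable (fun y => ∫ x, Q 1 x y ∂γ) γ := by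
    have := (hQint 1).integral_prod_right
    simpa using this
  have hae : ∀ᵐ y ∂γ, y ≠ (0:ℝ) := by
    have h0 : γ {(0:ℝ)} = 0 := by
      rw [hγ]
      exact gaussianReal_absolutelyContinuous 0 one_ne_zero (measure_singleton 0)
    rw [ae_iff]
    convert h0 using 2
    ext y
    simp
  have hdiffint : Integrable (fun y => (∫ x, Q 1 x y ∂γ) - ∫ x, Q 0 x y ∂γ) γ := by
    refine (hI1.sub hI0).congr (ae_of_all _ fun y => ?_)
    simp [Pi.sub_apply]
  have hpos : 0 < ∫ y, ((∫ x, Q 1 x y ∂γ) - ∫ x, Q 0 x y ∂γ) ∂γ := by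
    rw [integral_pos_iff_support_of_nonneg_ae
      (hae.mono fun y hy => sub_nonneg.mpr (hinner y hy).le) hdiffint]
    have hsub : {y : ℝ | y ≠ 0} ⊆ Function.support
        (fun y => (∫ x, Q 1 x y ∂γ) - ∫ x, Q 0 x y ∂γ) := by
      intro y hy
      exact sub_ne_zero.mpr (hinner y hy).ne'
    refine lt_of_lt_of_le ?_ (measure_mono hsub)
    have : γ {y : ℝ | y ≠ 0} = 1 := by
      have h0 : γ {(0:ℝ)} = 0 := by
        rw [hγ]
        exact gaussianReal_absolutelyContinuous 0 one_ne_zero (measure_singleton 0)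
      have : {y : ℝ | y ≠ 0} = {(0:ℝ)}ᶜ := by ext y; simp
      rw [this, measure_compl (measurableSet_singleton 0) (measure_ne_top _ _), h0,
        measure_univ]
      simp
    rw [this]
    norm_num
  have hfinal : (∫ y, (∫ x, Q 0 x y ∂γ) ∂γ) < ∫ y, (∫ x, Q 1 x y ∂γ) ∂γ := by
    have := integral_sub hI1 hI0
    rw [this] at hpos
    linarith
  have hcontra : (∫ y, (∫ x, Q 0 x y ∂γ) ∂γ) = ∫ y, (∫ x, Q 1 x y ∂γ) ∂γ := by
    rw [← hiter 0, ← hiter 1, ← htrans 0, ← htrans 1]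
    exact hsq
  exact absurd hcontra hfinal.ne
end

section
/- Let (Tₙ) be estimators and (T̃ₙ) shrinkage estimators with T̃ₙ = (Tₙ − ψ(θ₀))·1_{Aₙ} + ψ(θ₀), where Aₙ is the un-filtering event. Suppose P(Aₙᶜ) → 1 (the filtering probability converges to 1), the normalized sequence (Tₙ − ψ(θₙ))²/σ_{Tₙ}² is uniformly integrable with E[(Tₙ − ψ(θₙ))²] = σ_{Tₙ}²(1 + o(1)) (asymptotically unbiased with matching variance), and (ψ(θₙ) − ψ(θ₀))/σ_{Tₙ} → K ∈ [0, ∞]. Then MSE(T̃ₙ)/MSE(Tₙ) → K². In particular, the shrinkage estimator is asymptotically more efficient than Tₙ iff K < 1, equivalent iff K = 1, and less efficient iff K > 1. -/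
open MeasureTheory Filter

theorem stmt15 {Ω : Type*} [MeasurableSpace Ω] (μ : Measure Ω) [IsProbabilityMeasure μ]
    (T : ℕ → Ω → ℝ) (A : ℕ → Set Ω) (hA : ∀ n, MeasurableSet (A n))
    (ψθ : ℕ → ℝ) (ψ₀ : ℝ) (σ : ℕ → ℝ) (hσ : ∀ n, 0 < σ n)
    (Ttilde : ℕ → Ω → ℝ)
    (hTtilde : ∀ n ω, Ttilde n ω = (T n ω - ψ₀) * ((A n).indicator (1 : Ω → ℝ) ω) + ψ₀)
    -- the filtering probability tends to 1:
    (hfilt : Tendsto (fun n => (μ (A n)ᶜ).toReal) atTop (nhds 1))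
    -- uniform integrability of the normalized squared errors:
    (hUI : UnifIntegrable (fun n ω => ((T n ω - ψθ n) / σ n) ^ 2) 1 μ)
    (hInt : ∀ n, MemLp (T n) 2 μ)
    -- asymptotically unbiased with matching variance:
    (hvar : Tendsto (fun n => (∫ ω, (T n ω - ψθ n) ^ 2 ∂μ) / (σ n) ^ 2) atTop (nhds 1))
    (K : ℝ) (hK0 : 0 ≤ K)
    (hK : Tendsto (fun n => (ψθ n - ψ₀) / σ n) atTop (nhds K)) :
    Tendsto (fun n => (∫ ω, (Ttilde n ω - ψθ n) ^ 2 ∂μ) / (∫ ω, (T n ω - ψθ n) ^ 2 ∂μ))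
      atTop (nhds (K ^ 2)) := by
  have hσne : ∀ n, σ n ≠ 0 := fun n => (hσ n).ne'
  -- integrability of the squared errors
  have hgint : ∀ n, Integrable (fun ω => (T n ω - ψθ n) ^ 2) μ := fun n =>
    ((hInt n).sub (memLp_const (ψθ n))).integrable_sq
  -- μ (A n) |>.toReal → 0
  have hμA : Tendsto (fun n => (μ (A n)).toReal) atTop (nhds 0) := by
    have h1 : ∀ n, (μ (A n)).toReal = 1 - (μ (A n)ᶜ).toReal := by
      intro n
      have := prob_compl_eq_one_sub (μ := μ) (hA n)
      have h2 : (μ (A n)ᶜ).toReal = 1 - (μ (A n)).toReal := by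
        rw [this, ENNReal.toReal_sub_of_le (prob_le_one) ENNReal.one_ne_top]
        simp
      linarith
    simp only [h1]
    have := (tendsto_const_nhds (x := (1:ℝ)) (f := atTop)).sub hfilt
    simpa using this
  -- the term over A n tends to 0
  have hAterm : Tendsto (fun n => (∫ ω, (A n).indicator (fun ω => (T n ω - ψθ n) ^ 2) ω ∂μ)
      / (σ n) ^ 2) atTop (nhds 0) := by
    rw [NormedAddCommGroup.tendsto_nhds_zero]
    intro ε hε
    obtain ⟨δ, hδ, hbound⟩ := hUI (half_pos hε)
    have hev : ∀ᶠ n in atTop, (μ (A n)).toReal ≤ δ :=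
      hμA.eventually_le_const hδ
    filter_upwards [hev] with n hn
    have hμle : μ (A n) ≤ ENNReal.ofReal δ := by
      rw [ENNReal.le_ofReal_iff_toReal_le (measure_ne_top μ _) hδ.le]; exact hn
    have hb := hbound n (A n) (hA n) hμle
    -- the indicator of the normalized square
    set f : Ω → ℝ := fun ω => ((T n ω - ψθ n) / σ n) ^ 2 with hf
    have hfnn : ∀ ω, 0 ≤ (A n).indicator f ω := fun ω =>
      Set.indicator_nonneg (fun ω _ => sq_nonneg _) ω
    have hfint : Integrable ((A n).indicator f) μ := by
      have : Integrable f μ := by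
        simp only [hf, div_pow]
        exact (hgint n).div_const _
      exact this.indicator (hA n)
    have hIle : ∫ ω, (A n).indicator f ω ∂μ ≤ ε / 2 := by
      have h1 : ENNReal.ofReal (∫ ω, (A n).indicator f ω ∂μ)
          = eLpNorm ((A n).indicator f) 1 μ := by
        rw [eLpNorm_one_eq_lintegral_enorm,
          ← ofReal_integral_norm_eq_lintegral_enorm hfint]
        congr 1
        exact integral_congr_ae (Eventually.of_forall fun ω => (Real.norm_of_nonneg (hfnn ω)).symm)
      have := h1 ▸ hb
      rwa [ENNReal.ofReal_le_ofReal_iff (by positivity)] at this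
    have heq : (∫ ω, (A n).indicator (fun ω => (T n ω - ψθ n) ^ 2) ω ∂μ) / (σ n) ^ 2
        = ∫ ω, (A n).indicator f ω ∂μ := by
      rw [← integral_div]
      refine integral_congr_ae (Eventually.of_forall fun ω => ?_)
      by_cases h : ω ∈ A n <;>
        simp [hf, Set.indicator_of_mem, Set.indicator_of_notMem, h, div_pow]
    rw [Real.norm_eq_abs, abs_of_nonneg (by rw [heq]; exact integral_nonneg hfnn), heq]
    linarith
  -- the compl term tends to K^2
  have hCterm : Tendsto (fun n => (μ (A n)ᶜ).toReal * ((ψ₀ - ψθ n) / σ n) ^ 2)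
      atTop (nhds (K ^ 2)) := by
    have h1 : Tendsto (fun n => ((ψ₀ - ψθ n) / σ n) ^ 2) atTop (nhds (K ^ 2)) := by
      have : ∀ n, ((ψ₀ - ψθ n) / σ n) ^ 2 = ((ψθ n - ψ₀) / σ n) ^ 2 := by
        intro n; rw [show ψ₀ - ψθ n = -(ψθ n - ψ₀) by ring, neg_div, neg_sq]
      simp only [this]
      exact hK.pow 2
    simpa using hfilt.mul h1
  -- decomposition of the numerator
  have hnum : ∀ n, (∫ ω, (Ttilde n ω - ψθ n) ^ 2 ∂μ) / (σ n) ^ 2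
      = (∫ ω, (A n).indicator (fun ω => (T n ω - ψθ n) ^ 2) ω ∂μ) / (σ n) ^ 2
        + (μ (A n)ᶜ).toReal * ((ψ₀ - ψθ n) / σ n) ^ 2 := by
    intro n
    have hdecomp : (fun ω => (Ttilde n ω - ψθ n) ^ 2)
        = fun ω => (A n).indicator (fun ω => (T n ω - ψθ n) ^ 2) ω
          + (A n)ᶜ.indicator (fun _ => (ψ₀ - ψθ n) ^ 2) ω := by
      funext ω
      by_cases h : ω ∈ A n <;>
        simp [hTtilde, Set.indicator_of_mem, Set.indicator_of_notMem, h]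
    rw [hdecomp, integral_add (((hgint n).indicator (hA n)))
      ((integrable_const _).indicator (hA n).compl), add_div,
      integral_indicator_const _ (hA n).compl]
    congr 1
    rw [smul_eq_mul, mul_div_assoc, div_pow]; rfl
  -- conclude
  have hfinal : Tendsto (fun n => ((∫ ω, (Ttilde n ω - ψθ n) ^ 2 ∂μ) / (σ n) ^ 2)
      / ((∫ ω, (T n ω - ψθ n) ^ 2 ∂μ) / (σ n) ^ 2)) atTop (nhds (K ^ 2)) := by
    have h1 : Tendsto (fun n => (∫ ω, (Ttilde n ω - ψθ n) ^ 2 ∂μ) / (σ n) ^ 2)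
        atTop (nhds (K ^ 2)) := by
      simp only [hnum]
      simpa using hAterm.add hCterm
    have := h1.div hvar one_ne_zero; rw [div_one] at this; exact this
  refine hfinal.congr fun n => ?_
  have hs : (σ n) ^ 2 ≠ 0 := pow_ne_zero _ (hσne n)
  rcases eq_or_ne (∫ ω, (T n ω - ψθ n) ^ 2 ∂μ) 0 with h | h
  · simp [h]
  · field_simp
    exact mul_div_cancel_right₀ _ (hσne n)
end

section
/- Let X ~ N(μ, 1/n) i.i.d. sample mean model and define the Hodges-type estimator μ̃ = X̄·1_{|X̄| > n^{−1/4}}. If μ = 0 (fixed), then for every rate rₙ → ∞, rₙ(μ̃ − 0) → 0 in probability; i.e., μ̃ is super-efficient at 0, converging faster than any polynomial rate. -/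
open MeasureTheory ProbabilityTheory Filter
open scoped NNReal Topology

lemma tail_set_meas (a : ℝ) : MeasurableSet {x : ℝ | a < |x|} :=
  measurableSet_lt measurable_const measurable_abs

lemma std_tail_tendsto :
    Tendsto (fun n : ℕ => gaussianReal 0 1 {x : ℝ | (n : ℝ) ^ ((1:ℝ)/4) < |x|})
      atTop (𝓝 0) := by
  have h_anti : Antitone (fun n : ℕ => {x : ℝ | (n : ℝ) ^ ((1:ℝ)/4) < |x|}) := by
    intro m n hmn x hx
    simp only [Set.mem_setOf_eq] at hx ⊢
    refine lt_of_le_of_lt ?_ hx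
    exact Real.rpow_le_rpow (by positivity) (by exact_mod_cast hmn) (by norm_num)
  have h_inter : ⋂ n : ℕ, {x : ℝ | (n : ℝ) ^ ((1:ℝ)/4) < |x|} = ∅ := by
    ext x
    simp only [Set.mem_iInter, Set.mem_setOf_eq, Set.mem_empty_iff_false, iff_false, not_forall,
      not_lt]
    obtain ⟨n, hn⟩ := exists_nat_ge (|x| ^ (4:ℕ))
    refine ⟨n, ?_⟩
    calc |x| = (|x| ^ (4:ℕ)) ^ ((1:ℝ)/4) := by
          rw [← Real.rpow_natCast |x| 4, ← Real.rpow_mul (abs_nonneg x)]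
          norm_num
      _ ≤ (n : ℝ) ^ ((1:ℝ)/4) := Real.rpow_le_rpow (by positivity) hn (by norm_num)
  have := tendsto_measure_iInter_atTop (μ := gaussianReal 0 1)
    (s := fun n : ℕ => {x : ℝ | (n : ℝ) ^ ((1:ℝ)/4) < |x|})
    (fun n => (tail_set_meas _).nullMeasurableSet) h_anti ⟨0, measure_ne_top _ _⟩
  rw [h_inter, measure_empty] at this
  exact this

lemma scaled_tail_eq (n : ℕ) (hn : 0 < n) :
    gaussianReal 0 ((n : ℝ≥0))⁻¹ {x : ℝ | (n : ℝ) ^ (-(1 / 4 : ℝ)) < |x|}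
      = gaussianReal 0 1 {x : ℝ | (n : ℝ) ^ ((1:ℝ)/4) < |x|} := by
  have hn' : (0:ℝ) < n := by exact_mod_cast hn
  set c : ℝ := (n : ℝ) ^ (-(1/2 : ℝ)) with hc
  have hcpos : 0 < c := Real.rpow_pos_of_pos hn' _
  have hmap : (gaussianReal 0 1).map (c * ·) = gaussianReal 0 ((n : ℝ≥0))⁻¹ := by
    rw [gaussianReal_map_const_mul]
    congr 1
    · ring
    · ext
      push_cast
      rw [hc, ← Real.rpow_natCast ((n:ℝ) ^ (-(1/2:ℝ))) 2, ← Real.rpow_mul hn'.le]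
      norm_num
      rw [Real.rpow_neg_one]
  rw [← hmap, Measure.map_apply (measurable_const_mul c) (tail_set_meas _)]
  congr 1
  ext x
  simp only [Set.mem_preimage, Set.mem_setOf_eq, abs_mul, abs_of_pos hcpos]
  rw [← div_lt_iff₀' hcpos, hc, ← Real.rpow_sub hn']
  norm_num

theorem stmt17 {Ω : Type*} [MeasurableSpace Ω] (μ : Measure Ω) [IsProbabilityMeasure μ]
    (Xbar : ℕ → Ω → ℝ) (hmeas : ∀ n, Measurable (Xbar n))
    (hlaw : ∀ n : ℕ, 0 < n → μ.map (Xbar n) = gaussianReal 0 ((n : ℝ≥0))⁻¹)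
    (μtilde : ℕ → Ω → ℝ)
    (hμtilde : ∀ n ω, μtilde n ω =
      if (n : ℝ) ^ (-(1 / 4 : ℝ)) < |Xbar n ω| then Xbar n ω else 0)
    (r : ℕ → ℝ) (hr : Tendsto r atTop atTop) :
    TendstoInMeasure μ (fun n ω => r n * μtilde n ω) atTop 0 := by
  rw [tendstoInMeasure_iff_dist]
  intro ε hε
  have hbound : ∀ n : ℕ, 0 < n →
      μ {ω | ε ≤ dist (r n * μtilde n ω) ((0 : Ω → ℝ) ω)}
        ≤ gaussianReal 0 1 {x : ℝ | (n : ℝ) ^ ((1:ℝ)/4) < |x|} := by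
    intro n hn
    have hsub : {ω | ε ≤ dist (r n * μtilde n ω) ((0 : Ω → ℝ) ω)}
        ⊆ Xbar n ⁻¹' {x : ℝ | (n : ℝ) ^ (-(1 / 4 : ℝ)) < |x|} := by
      intro ω hω
      simp only [Set.mem_setOf_eq, Pi.zero_apply, dist_zero_right, Real.norm_eq_abs] at hω
      by_contra h
      simp only [Set.mem_preimage, Set.mem_setOf_eq, not_lt] at h
      rw [hμtilde, if_neg (not_lt.mpr h)] at hω
      simp at hω
      linarith
    calc μ {ω | ε ≤ dist (r n * μtilde n ω) ((0 : Ω → ℝ) ω)}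
        ≤ μ (Xbar n ⁻¹' {x : ℝ | (n : ℝ) ^ (-(1 / 4 : ℝ)) < |x|}) := measure_mono hsub
      _ = (μ.map (Xbar n)) {x : ℝ | (n : ℝ) ^ (-(1 / 4 : ℝ)) < |x|} :=
          (Measure.map_apply (hmeas n) (tail_set_meas _)).symm
      _ = gaussianReal 0 1 {x : ℝ | (n : ℝ) ^ ((1:ℝ)/4) < |x|} := by
          rw [hlaw n hn, scaled_tail_eq n hn]
  refine tendsto_of_tendsto_of_tendsto_of_le_of_le' tendsto_const_nhds std_tail_tendsto
    (Eventually.of_forall fun n => zero_le') ?_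
  filter_upwards [eventually_gt_atTop 0] with n hn using hbound n hn
end

section
/- In the Hodges estimator setting with X̄ ~ N(μₙ, 1/n) and μ̃ = X̄·1_{|X̄| > n^{−1/4}}, if μₙ = n^{−1/3}, then √n(μ̃ − μₙ) → −∞ in probability; i.e., along this local sequence the normalized error of the Hodges estimator diverges. -/
open MeasureTheory ProbabilityTheory Filter
open scoped NNReal

/-- Affine change of variables for the Gaussian measure. -/
lemma gauss_affine (m : ℝ) (v : ℝ≥0) (hv : v ≠ 0) {s : Set ℝ} (hs : MeasurableSet s) :
    gaussianReal m v s = gaussianReal 0 1 ((fun y => Real.sqrt v * y + m) ⁻¹' s) := by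
  have h1 : (gaussianReal 0 1).map (fun y => Real.sqrt v * y) = gaussianReal 0 v := by
    have h := gaussianReal_map_const_mul (μ := 0) (v := 1) (Real.sqrt v)
    rw [show ((Real.sqrt v) * ·) = (fun y => Real.sqrt v * y) from rfl] at h
    rw [h, mul_zero]
    congr 1
    ext
    simp [Real.sq_sqrt v.coe_nonneg]
  have h2 : ((gaussianReal 0 1).map (fun y => Real.sqrt v * y)).map (· + m)
      = gaussianReal m v := by
    rw [h1, gaussianReal_map_add_const, zero_add]
  have hmeasf : Measurable (fun y : ℝ => Real.sqrt v * y) := measurable_id.const_mul _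
  rw [← h2, Measure.map_map (measurable_id'.add_const m) hmeasf,
    Measure.map_apply ((measurable_id'.add_const m).comp hmeasf) hs]
  rfl

lemma tendsto_pow16 : Tendsto (fun n : ℕ => (n : ℝ) ^ ((1 : ℝ)/6)) atTop atTop :=
  (tendsto_rpow_atTop (by norm_num)).comp tendsto_natCast_atTop_atTop

lemma tendsto_diff_pow : Tendsto (fun n : ℕ =>
    (n : ℝ) ^ ((1 : ℝ)/4) - (n : ℝ) ^ ((1 : ℝ)/6)) atTop atTop := by
  have h1 : Tendsto (fun n : ℕ => (n : ℝ) ^ ((1 : ℝ)/6) * ((n : ℝ) ^ ((1 : ℝ)/12) - 1))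
      atTop atTop := by
    refine Tendsto.atTop_mul_atTop₀ tendsto_pow16 ?_
    exact tendsto_atTop_add_const_right _ _
      ((tendsto_rpow_atTop (by norm_num)).comp tendsto_natCast_atTop_atTop)
  refine h1.congr' ?_
  filter_upwards [eventually_ge_atTop 1] with n hn
  have hnpos : (0 : ℝ) < n := by exact_mod_cast hn
  rw [mul_sub, mul_one, ← Real.rpow_add hnpos]
  norm_num

theorem stmt18 {Ω : Type*} [MeasurableSpace Ω] (μ : Measure Ω) [IsProbabilityMeasure μ]
    (Xbar : ℕ → Ω → ℝ) (hmeas : ∀ n, Measurable (Xbar n))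
    (μloc : ℕ → ℝ) (hμloc : ∀ n : ℕ, μloc n = (n : ℝ) ^ (-(1 / 3 : ℝ)))
    (hlaw : ∀ n : ℕ, 0 < n → μ.map (Xbar n) = gaussianReal (μloc n) ((n : ℝ≥0))⁻¹)
    (μtilde : ℕ → Ω → ℝ)
    (hμtilde : ∀ n ω, μtilde n ω =
      if (n : ℝ) ^ (-(1 / 4 : ℝ)) < |Xbar n ω| then Xbar n ω else 0) :
    ∀ M : ℝ, Tendsto
      (fun n : ℕ => (μ {ω | Real.sqrt (n : ℝ) * (μtilde n ω - μloc n) ≤ M}).toReal)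
      atTop (nhds 1) := by
  intro M
  set g : Measure ℝ := gaussianReal 0 1 with hg
  set c : ℕ → ℝ := fun n => (n : ℝ) ^ (-(1 / 4 : ℝ)) with hc
  set A : ℕ → Set Ω := fun n => {ω | |Xbar n ω| ≤ c n} with hA
  set R : ℕ → ℝ := fun n => Real.sqrt n * (c n - μloc n) with hR
  have hsqrt_eq : ∀ n : ℕ, Real.sqrt (n : ℝ) = (n : ℝ) ^ ((1:ℝ)/2) := fun n =>
    Real.sqrt_eq_rpow (n : ℝ)
  -- R n = n^{1/4} - n^{1/6} for n ≥ 1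
  have hRe : ∀ᶠ n : ℕ in atTop, R n = (n : ℝ) ^ ((1:ℝ)/4) - (n : ℝ) ^ ((1:ℝ)/6) := by
    filter_upwards [eventually_ge_atTop 1] with n hn
    have hnpos : (0 : ℝ) < n := by exact_mod_cast hn
    simp only [hR, hc, hμloc, hsqrt_eq]
    rw [mul_sub, ← Real.rpow_add hnpos, ← Real.rpow_add hnpos]
    norm_num
  have hRtop : Tendsto R atTop atTop := tendsto_diff_pow.congr' (hRe.mono fun n h => h.symm)
  -- √n * μloc n = n^{1/6}
  have hre : ∀ᶠ n : ℕ in atTop, Real.sqrt n * μloc n = (n : ℝ) ^ ((1:ℝ)/6) := by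
    filter_upwards [eventually_ge_atTop 1] with n hn
    have hnpos : (0 : ℝ) < n := by exact_mod_cast hn
    rw [hsqrt_eq n, hμloc, ← Real.rpow_add hnpos]
    norm_num
  have hrtop : Tendsto (fun n : ℕ => Real.sqrt n * μloc n) atTop atTop :=
    tendsto_pow16.congr' (hre.mono fun n h => h.symm)
  have habs : ∀ b : ℝ, MeasurableSet {x : ℝ | |x| ≤ b} := fun b =>
    measurableSet_le measurable_abs measurable_const
  -- lower bound: μ (A n) ≥ g (Icc (-R n) (R n)) eventually
  have hlow : ∀ᶠ n : ℕ in atTop, g (Set.Icc (-(R n)) (R n)) ≤ μ (A n) := by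
    filter_upwards [eventually_ge_atTop 1] with n hn
    have hnpos : 0 < n := hn
    have hnRpos : (0 : ℝ) < Real.sqrt n :=
      Real.sqrt_pos.mpr (by exact_mod_cast hn)
    have hv : ((n : ℝ≥0))⁻¹ ≠ 0 :=
      inv_ne_zero (Nat.cast_ne_zero.mpr (by omega))
    have hAeq : μ (A n) = gaussianReal (μloc n) ((n : ℝ≥0))⁻¹ {x : ℝ | |x| ≤ c n} := by
      rw [← hlaw n hnpos, Measure.map_apply (hmeas n) (habs (c n))]
      rfl
    rw [hAeq, gauss_affine _ _ hv (habs (c n))]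
    refine measure_mono ?_
    intro y hy
    have hyabs : |y| ≤ R n := abs_le.mpr ⟨(Set.mem_Icc.mp hy).1, (Set.mem_Icc.mp hy).2⟩
    have hcoe : Real.sqrt ((((n : ℝ≥0))⁻¹ : ℝ≥0) : ℝ) = (Real.sqrt n)⁻¹ := by
      rw [NNReal.coe_inv, NNReal.coe_natCast, Real.sqrt_inv]
    have hmnn : 0 ≤ μloc n := by rw [hμloc]; positivity
    show |Real.sqrt ((((n : ℝ≥0))⁻¹ : ℝ≥0) : ℝ) * y + μloc n| ≤ c n
    rw [hcoe]
    calc |(Real.sqrt n)⁻¹ * y + μloc n|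
        ≤ |(Real.sqrt n)⁻¹ * y| + |μloc n| := abs_add_le _ _
      _ = (Real.sqrt n)⁻¹ * |y| + μloc n := by
          rw [abs_mul, abs_of_nonneg (inv_nonneg.mpr hnRpos.le), abs_of_nonneg hmnn]
      _ ≤ (Real.sqrt n)⁻¹ * R n + μloc n := by
          gcongr
      _ = c n := by
          rw [hR, inv_mul_cancel_left₀ hnRpos.ne']
          ring
  -- g (Icc (-r) r) → 1 as r → ∞
  have hIcc : Tendsto (fun r : ℝ => g (Set.Icc (-r) r)) atTop (nhds 1) := by
    have hmono : Monotone (fun r : ℝ => Set.Icc (-r) r) := fun a b hab =>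
      Set.Icc_subset_Icc (neg_le_neg hab) hab
    have h := tendsto_measure_iUnion_atTop (μ := g) hmono
    have hu : ⋃ r : ℝ, Set.Icc (-r) r = Set.univ := by
      ext x
      simp only [Set.mem_iUnion, Set.mem_Icc, Set.mem_univ, iff_true]
      exact ⟨|x|, neg_abs_le x, le_abs_self x⟩
    rw [hu] at h
    simpa [measure_univ, Function.comp_def] using h
  have hAten : Tendsto (fun n => μ (A n)) atTop (nhds 1) := by
    refine tendsto_of_tendsto_of_tendsto_of_le_of_le' (hIcc.comp hRtop) tendsto_const_nhds
      hlow (Eventually.of_forall fun n => prob_le_one)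
  have hAto : Tendsto (fun n => (μ (A n)).toReal) atTop (nhds 1) := by
    have h := (ENNReal.tendsto_toReal (a := 1) ENNReal.one_ne_top).comp hAten
    simpa [Function.comp_def] using h
  -- A n ⊆ target set eventually
  have hsub : ∀ᶠ n : ℕ in atTop,
      A n ⊆ {ω | Real.sqrt (n : ℝ) * (μtilde n ω - μloc n) ≤ M} := by
    filter_upwards [hrtop.eventually_ge_atTop (-M)] with n hn
    intro ω hω
    have hz : μtilde n ω = 0 := by
      rw [hμtilde, if_neg (not_lt.mpr hω)]
    show Real.sqrt (n : ℝ) * (μtilde n ω - μloc n) ≤ M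
    rw [hz, zero_sub, mul_neg]
    linarith
  refine tendsto_of_tendsto_of_tendsto_of_le_of_le' hAto tendsto_const_nhds ?_ ?_
  · filter_upwards [hsub] with n hsn
    exact ENNReal.toReal_mono (measure_ne_top μ _) (measure_mono hsn)
  · refine Eventually.of_forall fun n => ?_
    have := ENNReal.toReal_mono ENNReal.one_ne_top (prob_le_one (μ := μ)
      (s := {ω | Real.sqrt (n : ℝ) * (μtilde n ω - μloc n) ≤ M}))
    simpa using this
end

section
/- Let X̄ₙ, Ȳₙ be independent with X̄ₙ ~ N(γₙ, 1/n), Ȳₙ ~ N(βₙ, 1/n). If δ > 1 and max{ lim n^δ γₙβₙ, lim n^{δ−1/2}√(n⁻¹ + γₙ² + βₙ²) } = ∞, then P(|X̄ₙȲₙ| < c n^{−δ}) → 0 for every constant c > 0; i.e., the filtration probability L equals 0. -/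
open MeasureTheory ProbabilityTheory Filter
open scoped NNReal

lemma gauss_interval_bound (m : ℝ) (n : ℕ) (hn : 0 < n) (t : ℝ) (ht : 0 ≤ t) :
    (gaussianReal m ((n : ℝ≥0))⁻¹ {x : ℝ | |x| < t}).toReal ≤ 2 * t * Real.sqrt n := by
  have hn' : (0:ℝ) < n := by exact_mod_cast hn
  have hv : ((n : ℝ≥0))⁻¹ ≠ 0 := by
    simp [hn.ne']
  have hS : {x : ℝ | |x| < t} = Set.Ioo (-t) t := by
    ext x; simp [abs_lt, Set.mem_Ioo]
  have hvr : (((n : ℝ≥0))⁻¹ : ℝ) = (n : ℝ)⁻¹ := by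
    push_cast; ring
  have hpdf : ∀ x : ℝ, gaussianPDF m ((n : ℝ≥0))⁻¹ x ≤ ENNReal.ofReal (Real.sqrt n) := by
    intro x
    rw [gaussianPDF]
    apply ENNReal.ofReal_le_ofReal
    rw [gaussianPDFReal]
    have hexp : Real.exp (-(x - m) ^ 2 / (2 * (((n : ℝ≥0))⁻¹ : ℝ))) ≤ 1 := by
      apply Real.exp_le_one_iff.mpr
      apply div_nonpos_of_nonpos_of_nonneg
      · simp [sq_nonneg]
      · positivity
    have hinv : (Real.sqrt (2 * Real.pi * (((n : ℝ≥0))⁻¹ : ℝ)))⁻¹ ≤ Real.sqrt n := by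
      have hpi : (1:ℝ) ≤ 2 * Real.pi := by
        have := Real.pi_gt_three; linarith
      have h1 : (n : ℝ)⁻¹ ≤ 2 * Real.pi * (((n : ℝ≥0))⁻¹ : ℝ) := by
        rw [hvr]
        nlinarith [inv_pos.mpr hn']
      have h2 : Real.sqrt ((n : ℝ)⁻¹) ≤ Real.sqrt (2 * Real.pi * (((n : ℝ≥0))⁻¹ : ℝ)) :=
        Real.sqrt_le_sqrt h1
      rw [Real.sqrt_inv] at h2
      have h3 : (0:ℝ) < (Real.sqrt n)⁻¹ := by positivity
      calc (Real.sqrt (2 * Real.pi * (((n : ℝ≥0))⁻¹ : ℝ)))⁻¹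
          ≤ ((Real.sqrt n)⁻¹)⁻¹ := by
            apply inv_anti₀ h3 h2
        _ = Real.sqrt n := inv_inv _
    calc (Real.sqrt (2 * Real.pi * (((n : ℝ≥0))⁻¹ : ℝ)))⁻¹ *
          Real.exp (-(x - m) ^ 2 / (2 * (((n : ℝ≥0))⁻¹ : ℝ)))
        ≤ (Real.sqrt (2 * Real.pi * (((n : ℝ≥0))⁻¹ : ℝ)))⁻¹ * 1 := by
          apply mul_le_mul_of_nonneg_left hexp (by positivity)
      _ = (Real.sqrt (2 * Real.pi * (((n : ℝ≥0))⁻¹ : ℝ)))⁻¹ := mul_one _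
      _ ≤ Real.sqrt n := hinv
  have h1 : gaussianReal m ((n : ℝ≥0))⁻¹ {x : ℝ | |x| < t}
      ≤ ENNReal.ofReal (2 * t * Real.sqrt n) := by
    rw [hS, gaussianReal_apply _ hv]
    calc ∫⁻ x in Set.Ioo (-t) t, gaussianPDF m ((n : ℝ≥0))⁻¹ x
        ≤ ∫⁻ _ in Set.Ioo (-t) t, ENNReal.ofReal (Real.sqrt n) :=
          lintegral_mono fun x => hpdf x
      _ = ENNReal.ofReal (Real.sqrt n) * volume (Set.Ioo (-t) t) := setLIntegral_const _ _
      _ = ENNReal.ofReal (Real.sqrt n) * ENNReal.ofReal (t - -t) := by rw [Real.volume_Ioo]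
      _ ≤ ENNReal.ofReal (2 * t * Real.sqrt n) := by
          rw [← ENNReal.ofReal_mul (Real.sqrt_nonneg _)]
          apply ENNReal.ofReal_le_ofReal
          nlinarith [Real.sqrt_nonneg (n:ℝ)]
  exact ENNReal.toReal_le_of_le_ofReal (by positivity) h1

theorem stmt19 {Ω : Type*} [MeasurableSpace Ω] (μ : Measure Ω) [IsProbabilityMeasure μ]
    (Xbar Ybar : ℕ → Ω → ℝ)
    (hXmeas : ∀ n, Measurable (Xbar n)) (hYmeas : ∀ n, Measurable (Ybar n))
    (γ β : ℕ → ℝ)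
    (hX : ∀ n : ℕ, 0 < n → μ.map (Xbar n) = gaussianReal (γ n) ((n : ℝ≥0))⁻¹)
    (hY : ∀ n : ℕ, 0 < n → μ.map (Ybar n) = gaussianReal (β n) ((n : ℝ≥0))⁻¹)
    (hind : ∀ n, IndepFun (Xbar n) (Ybar n) μ)
    (δ : ℝ) (hδ : 1 < δ)
    (hdiv : Tendsto (fun n : ℕ => (n : ℝ) ^ δ * γ n * β n) atTop atTop ∨
      Tendsto (fun n : ℕ => (n : ℝ) ^ (δ - 1 / 2) *
        Real.sqrt ((n : ℝ)⁻¹ + (γ n) ^ 2 + (β n) ^ 2)) atTop atTop) :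
    ∀ c : ℝ, 0 < c →
      Tendsto (fun n => (μ {ω | |Xbar n ω * Ybar n ω| < c * (n : ℝ) ^ (-δ)}).toReal)
        atTop (nhds 0) := by
  intro c hc
  set t : ℕ → ℝ := fun n => Real.sqrt (c * (n : ℝ) ^ (-δ)) with ht_def
  -- the upper bound tends to 0
  have hg : Tendsto (fun n : ℕ => 4 * Real.sqrt (c * (n : ℝ) ^ (-δ) * n)) atTop (nhds 0) := by
    have h1 : Tendsto (fun x : ℝ => x ^ (1 - δ)) atTop (nhds 0) := by
      have := tendsto_rpow_neg_atTop (by linarith : (0:ℝ) < δ - 1)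
      simpa [show -(δ - 1) = 1 - δ by ring] using this
    have h2 : Tendsto (fun n : ℕ => ((n : ℝ)) ^ (1 - δ)) atTop (nhds 0) :=
      h1.comp tendsto_natCast_atTop_atTop
    have h3 : Tendsto (fun n : ℕ => (n : ℝ) ^ (-δ) * n) atTop (nhds 0) := by
      apply h2.congr'
      filter_upwards [eventually_ge_atTop 1] with n hn
      have hn' : (0:ℝ) < n := by exact_mod_cast hn
      rw [show (1:ℝ) - δ = -δ + 1 by ring, Real.rpow_add hn', Real.rpow_one]
    have h4 : Tendsto (fun n : ℕ => c * ((n : ℝ) ^ (-δ) * n)) atTop (nhds 0) := by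
      simpa using h3.const_mul c
    have h5 := (h4.sqrt).const_mul (4:ℝ)
    simp only [Real.sqrt_zero, mul_zero] at h5
    apply h5.congr
    intro n; ring_nf
  apply squeeze_zero' (Eventually.of_forall fun n => ENNReal.toReal_nonneg) _ hg
  filter_upwards [eventually_ge_atTop 1] with n hn
  have hn0 : 0 < n := hn
  have hn' : (0:ℝ) < n := by exact_mod_cast hn0
  have ht0 : 0 ≤ t n := Real.sqrt_nonneg _
  have hcn : (0:ℝ) ≤ c * (n : ℝ) ^ (-δ) := by positivity
  set A : Set Ω := {ω | |Xbar n ω| < t n}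
  set B : Set Ω := {ω | |Ybar n ω| < t n}
  have hEsub : {ω | |Xbar n ω * Ybar n ω| < c * (n : ℝ) ^ (-δ)} ⊆ A ∪ B := by
    intro ω hω
    by_contra h
    simp only [A, B, Set.mem_union, Set.mem_setOf_eq, not_or, not_lt] at h
    obtain ⟨h1, h2⟩ := h
    have : c * (n : ℝ) ^ (-δ) ≤ |Xbar n ω * Ybar n ω| := by
      rw [abs_mul]
      calc c * (n : ℝ) ^ (-δ) = t n * t n := (Real.mul_self_sqrt hcn).symm
        _ ≤ |Xbar n ω| * |Ybar n ω| := mul_le_mul h1 h2 ht0 (abs_nonneg _)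
    exact absurd hω (by simpa using not_lt.mpr this)
  have hmeasS : MeasurableSet {x : ℝ | |x| < t n} := by
    have : {x : ℝ | |x| < t n} = Set.Ioo (-(t n)) (t n) := by
      ext x; simp [abs_lt, Set.mem_Ioo]
    rw [this]; exact measurableSet_Ioo
  have hA : (μ A).toReal ≤ 2 * t n * Real.sqrt n := by
    have hmap : μ A = (μ.map (Xbar n)) {x : ℝ | |x| < t n} := by
      rw [Measure.map_apply (hXmeas n) hmeasS]; rfl
    rw [hmap, hX n hn0]
    exact gauss_interval_bound _ n hn0 _ ht0
  have hB : (μ B).toReal ≤ 2 * t n * Real.sqrt n := by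
    have hmap : μ B = (μ.map (Ybar n)) {x : ℝ | |x| < t n} := by
      rw [Measure.map_apply (hYmeas n) hmeasS]; rfl
    rw [hmap, hY n hn0]
    exact gauss_interval_bound _ n hn0 _ ht0
  calc (μ {ω | |Xbar n ω * Ybar n ω| < c * (n : ℝ) ^ (-δ)}).toReal
      ≤ (μ (A ∪ B)).toReal :=
        ENNReal.toReal_mono (measure_ne_top μ _) (measure_mono hEsub)
    _ ≤ (μ A + μ B).toReal :=
        ENNReal.toReal_mono
          (ENNReal.add_ne_top.mpr ⟨measure_ne_top μ _, measure_ne_top μ _⟩)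
          (measure_union_le _ _)
    _ = (μ A).toReal + (μ B).toReal := ENNReal.toReal_add (measure_ne_top μ _) (measure_ne_top μ _)
    _ ≤ 2 * t n * Real.sqrt n + 2 * t n * Real.sqrt n := add_le_add hA hB
    _ = 4 * (t n * Real.sqrt n) := by ring
    _ = 4 * Real.sqrt (c * (n : ℝ) ^ (-δ) * n) := by
        rw [ht_def]
        rw [Real.sqrt_mul hcn (n : ℝ)]
end
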